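/- Assume R_c > 1, let θ ∈ (0,1), η ∈ (θ,1), and let (S*, E*, I*, A*, Q*, R*) be the unique equilibrium with all coordinates positive. Let ε ∈ (0, S⁰(1 − η)) and set S̃(ε) = λ/(ηβ(aE* + I* + bA*)/(S⁰ − ε) + d) and k̃(ε) = S*(S⁰ + 2ε)/(S⁰ S̃(ε)); assume k̃(ε) < 1. Suppose a solution of the model and a time t₀ ≥ 0 are such that for all t ≥ t₀: E(t) ≤ θE*, I(t) < S⁰ + ε, A(t) < S⁰ + ε, S⁰ − ε < N(t) < S⁰ + ε, and S(t) > λ/(βm) − ε with m = max{a, b, 1}. Then for all t ≥ t₀ + T̃₁(ε) + T̃₂(ε) one has S(t)/N(t) > k̃(ε)S̃(ε)/(S⁰ + ε) > S*/S⁰, where T̃₁(ε) = max{ −(1/B₁)·ln[(η − θ)I*/(S⁰ + ε − θI*)], −(1/B₂)·ln[(η − θ)A*/(S⁰ + ε − θA*)] } and T̃₂(ε) = −(S̃(ε)/λ)·ln[(1 − k̃(ε))S̃(ε)/(S̃(ε) + ε − λ/(βm))]. -/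

import Mathlib

/-- `(S, E, I, A, Q, R)` is an equilibrium of the COVID-19 model with quarantine and
standard incidence rate: the total population is positive and all six right-hand
sides vanish. -/
def IsEquilibrium (lam β a b c d q1 q2 r1 r2 r3 p S E I A Q R : ℝ) : Prop :=
  0 < S + E + I + A + Q + R ∧
  lam - β * S * (a * E + I + b * A) / (S + E + I + A + Q + R) - d * S = 0 ∧
  β * S * (a * E + I + b * A) / (S + E + I + A + Q + R) - (c + d) * E = 0 ∧
  p * c * E - (q1 + r1 + d) * I = 0 ∧
  (1 - p) * c * E - (q2 + r2 + d) * A = 0 ∧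
  q1 * I + q2 * A - (r3 + d) * Q = 0 ∧
  r1 * I + r2 * A + r3 * Q - d * R = 0

/-- An equilibrium all of whose six coordinates are strictly positive. -/
def IsPositiveEquilibrium (lam β a b c d q1 q2 r1 r2 r3 p S E I A Q R : ℝ) : Prop :=
  IsEquilibrium lam β a b c d q1 q2 r1 r2 r3 p S E I A Q R ∧
  0 < S ∧ 0 < E ∧ 0 < I ∧ 0 < A ∧ 0 < Q ∧ 0 < R


lemma my_gronwall_le (f f' : ℝ → ℝ) (K c t0 : ℝ) (hK : 0 < K)
    (hder : ∀ t, t0 ≤ t → HasDerivAt f (f' t) t)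
    (hb : ∀ t, t0 ≤ t → f' t ≤ K * (c - f t)) :
    ∀ t, t0 ≤ t → f t ≤ c + (f t0 - c) * Real.exp (-(K * (t - t0))) := by
  intro t ht
  set g : ℝ → ℝ := fun s => (f s - c) * Real.exp (K * (s - t0)) with hg
  have hgd : ∀ s, t0 ≤ s →
      HasDerivAt g ((f' s + K * (f s - c)) * Real.exp (K * (s - t0))) s := by
    intro s hs
    have h1 : HasDerivAt (fun u : ℝ => K * (u - t0)) K s := by
      simpa using ((hasDerivAt_id s).sub_const t0).const_mul K
    have h2 : HasDerivAt (fun u : ℝ => Real.exp (K * (u - t0)))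
        (Real.exp (K * (s - t0)) * K) s := h1.exp
    have h3 : HasDerivAt (fun u => f u - c) (f' s) s := (hder s hs).sub_const c
    have h4 := h3.mul h2
    refine h4.congr_deriv ?_
    ring
  have hmono : AntitoneOn g (Set.Ici t0) := by
    apply antitoneOn_of_deriv_nonpos (convex_Ici t0)
    · intro s hs
      exact ((hgd s hs).continuousAt).continuousWithinAt
    · intro s hs
      rw [interior_Ici] at hs
      exact (hgd s (le_of_lt hs)).differentiableAt.differentiableWithinAt
    · intro s hs
      rw [interior_Ici] at hs
      rw [(hgd s hs.le).deriv]
      have hbb := hb s hs.le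
      have he := (Real.exp_pos (K * (s - t0))).le
      nlinarith
  have hgle : (f t - c) * Real.exp (K * (t - t0)) ≤ f t0 - c := by
    have := hmono Set.self_mem_Ici (Set.mem_Ici.2 ht) ht
    simpa [hg] using this
  have hexp : Real.exp (K * (t - t0)) * Real.exp (-(K * (t - t0))) = 1 := by
    rw [← Real.exp_add]; simp
  have hep := (Real.exp_pos (-(K * (t - t0)))).le
  have h4 := mul_le_mul_of_nonneg_right hgle hep
  rw [mul_assoc, hexp, mul_one] at h4
  linarith

lemma my_gronwall_ge (f f' : ℝ → ℝ) (K c t0 : ℝ) (hK : 0 < K)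
    (hder : ∀ t, t0 ≤ t → HasDerivAt f (f' t) t)
    (hb : ∀ t, t0 ≤ t → K * (c - f t) ≤ f' t) :
    ∀ t, t0 ≤ t → c + (f t0 - c) * Real.exp (-(K * (t - t0))) ≤ f t := by
  intro t ht
  have h := my_gronwall_le (fun s => -f s) (fun s => -f' s) K (-c) t0 hK
    (fun s hs => (hder s hs).neg)
    (fun s hs => by have := hb s hs; linarith [mul_comm K (c - f s)] ) t ht
  nlinarith [h]

theorem S_over_N_eventual_lower_bound
    (lam β a b c d q1 q2 r1 r2 r3 p B1 B2 m Rc S0 : ℝ)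
    (Sstar Estar Istar Astar Qstar Rstar θ η ε St kt T1 T2 t0 : ℝ)
    (S E I A Q R N : ℝ → ℝ)
    (hlam : 0 < lam) (hβ : 0 < β) (ha : 0 < a) (hb : 0 < b) (hc : 0 < c)
    (hd : 0 < d) (hq1 : 0 < q1) (hq2 : 0 < q2) (hr1 : 0 < r1) (hr2 : 0 < r2)
    (hr3 : 0 < r3) (hp : 0 < p) (hp1 : p < 1)
    (hB1 : B1 = q1 + r1 + d) (hB2 : B2 = q2 + r2 + d)
    (hm : m = max (max a b) 1)
    (hRc : Rc = a * β / (c + d) + p * c * β / ((c + d) * B1)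
      + b * β * c * (1 - p) / ((c + d) * B2))
    (hS0 : S0 = lam / d)
    (hRc1 : 1 < Rc)
    (hθ0 : 0 < θ) (hθ1 : θ < 1) (hθη : θ < η) (hη1 : η < 1)
    (hstar : IsPositiveEquilibrium lam β a b c d q1 q2 r1 r2 r3 p
      Sstar Estar Istar Astar Qstar Rstar)
    (hε0 : 0 < ε) (hε1 : ε < S0 * (1 - η))
    (hSt : St = lam / (η * β * (a * Estar + Istar + b * Astar) / (S0 - ε) + d))
    (hkt : kt = Sstar * (S0 + 2 * ε) / (S0 * St))
    (hkt1 : kt < 1)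
    (hT1 : T1 = max (-(1 / B1) * Real.log ((η - θ) * Istar / (S0 + ε - θ * Istar)))
      (-(1 / B2) * Real.log ((η - θ) * Astar / (S0 + ε - θ * Astar))))
    (hT2 : T2 = -(St / lam) * Real.log ((1 - kt) * St / (St + ε - lam / (β * m))))
    (hN : ∀ t, N t = S t + E t + I t + A t + Q t + R t)
    (hS' : ∀ t, 0 ≤ t →
      HasDerivAt S (lam - β * S t * (a * E t + I t + b * A t) / N t - d * S t) t)
    (hE' : ∀ t, 0 ≤ t →
      HasDerivAt E (β * S t * (a * E t + I t + b * A t) / N t - (c + d) * E t) t)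
    (hI' : ∀ t, 0 ≤ t → HasDerivAt I (p * c * E t - B1 * I t) t)
    (hA' : ∀ t, 0 ≤ t → HasDerivAt A ((1 - p) * c * E t - B2 * A t) t)
    (hQ' : ∀ t, 0 ≤ t → HasDerivAt Q (q1 * I t + q2 * A t - (r3 + d) * Q t) t)
    (hR' : ∀ t, 0 ≤ t → HasDerivAt R (r1 * I t + r2 * A t + r3 * Q t - d * R t) t)
    (hnonneg : ∀ t, 0 ≤ t →
      0 ≤ S t ∧ 0 ≤ E t ∧ 0 ≤ I t ∧ 0 ≤ A t ∧ 0 ≤ Q t ∧ 0 ≤ R t)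
    (hE0 : 0 < E 0)
    (hNpos : ∀ t, 0 ≤ t → 0 < N t)
    (ht0 : 0 ≤ t0)
    (hEb : ∀ t, t0 ≤ t → E t ≤ θ * Estar)
    (hIb : ∀ t, t0 ≤ t → I t < S0 + ε)
    (hAb : ∀ t, t0 ≤ t → A t < S0 + ε)
    (hNlow : ∀ t, t0 ≤ t → S0 - ε < N t)
    (hNhigh : ∀ t, t0 ≤ t → N t < S0 + ε)
    (hSlow : ∀ t, t0 ≤ t → lam / (β * m) - ε < S t)
    :
    ∀ t, t0 + T1 + T2 ≤ t →
      Sstar / S0 < kt * St / (S0 + ε) ∧ kt * St / (S0 + ε) < S t / N t := by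
  obtain ⟨⟨hNq, heq1, heq2, heq3, heq4, heq5, heq6⟩, hSs, hEs, hIs, hAs, hQs, hRs⟩ := hstar
  have hS0pos : 0 < S0 := by rw [hS0]; exact div_pos hlam hd
  have hηpos : 0 < η := lt_trans hθ0 hθη
  have hsum : Sstar + Estar + Istar + Astar + Qstar + Rstar = S0 := by
    rw [hS0, eq_div_iff hd.ne']
    linarith only [heq1, heq2, heq3, heq4, heq5, heq6]
  rw [hsum] at heq1 heq2
  set M : ℝ := a * Estar + Istar + b * Astar with hMdef
  have hMpos : 0 < M := by
    rw [hMdef]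
    have h1 := mul_pos ha hEs
    have h2 := mul_pos hb hAs
    linarith only [h1, h2, hIs]
  have hB1pos : 0 < B1 := by rw [hB1]; linarith only [hq1, hr1, hd]
  have hB2pos : 0 < B2 := by rw [hB2]; linarith only [hq2, hr2, hd]
  have hIeq : p * c * Estar = B1 * Istar := by rw [hB1]; linarith only [heq3]
  have hAeq : (1 - p) * c * Estar = B2 * Astar := by rw [hB2]; linarith only [heq4]
  have h1m : (1:ℝ) ≤ m := by rw [hm]; exact le_max_right _ _
  have ham : a ≤ m := by rw [hm]; exact le_trans (le_max_left a b) (le_max_left _ 1)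
  have hbm : b ≤ m := by rw [hm]; exact le_trans (le_max_right a b) (le_max_left _ 1)
  have hmpos : (0:ℝ) < m := lt_of_lt_of_le one_pos h1m
  have hp1' : (0:ℝ) < 1 - p := by linarith only [hp1]
  have hβm : (0:ℝ) < β * m := mul_pos hβ hmpos
  -- d*M ≤ m*(c+d)*Estar
  have hdM : d * M ≤ m * (c + d) * Estar := by
    have h1 : d * Istar ≤ p * c * Estar := by
      rw [hIeq, hB1]
      linarith only [mul_nonneg (add_pos hq1 hr1).le hIs.le]
    have h2 : d * (b * Astar) ≤ b * ((1 - p) * c * Estar) := by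
      rw [hAeq, hB2]
      linarith only [mul_nonneg hb.le (mul_nonneg (add_pos hq2 hr2).le hAs.le)]
    have hcE0 : (0:ℝ) ≤ c * Estar := (mul_pos hc hEs).le
    have h3 : p * c * Estar + b * ((1 - p) * c * Estar) ≤ m * c * Estar := by
      nlinarith only [mul_nonneg (mul_nonneg hp.le (by linarith only [h1m] : (0:ℝ) ≤ m - 1)) hcE0,
        mul_nonneg (mul_nonneg hp1'.le (by linarith only [hbm] : (0:ℝ) ≤ m - b)) hcE0]
    have h4 : d * (a * Estar) ≤ d * (m * Estar) := by
      nlinarith only [mul_nonneg (mul_nonneg hd.le (by linarith only [ham] : (0:ℝ) ≤ m - a)) hEs.le]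
    rw [hMdef]
    nlinarith only [h1, h2, h3, h4]
  have hS0ne : S0 ≠ 0 := hS0pos.ne'
  have heqE : β * Sstar * M = (c + d) * Estar * S0 := by
    field_simp [hS0ne] at heq2
    linarith only [heq2]
  have heqS : lam = β * Sstar * M / S0 + d * Sstar := by linarith only [heq1]
  have hlamS0 : lam = d * S0 := by rw [hS0]; field_simp
  -- lam ≤ β * m * Sstar
  have hcE : 0 < (c + d) * Estar := mul_pos (by linarith only [hc, hd]) hEs
  have hL : lam ≤ β * m * Sstar := by
    have heqEd : d * (β * Sstar * M) = d * ((c + d) * Estar * S0) := by rw [heqE]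
    have hstep : β * Sstar * (d * M) ≤ β * Sstar * (m * (c + d) * Estar) :=
      mul_le_mul_of_nonneg_left hdM (mul_pos hβ hSs).le
    have key : d * S0 * ((c + d) * Estar) ≤ β * m * Sstar * ((c + d) * Estar) := by
      nlinarith only [heqEd, hstep]
    have h5 := le_of_mul_le_mul_right key hcE
    linarith only [hlamS0, h5]
  have hεS0 : ε < S0 := by nlinarith only [hε1, mul_pos hS0pos hηpos]
  have hS0ε : 0 < S0 - ε := by linarith only [hεS0]
  have hηS0 : η * S0 < S0 - ε := by nlinarith only [hε1]
  have hdenpos : 0 < η * β * M / (S0 - ε) + d := by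
    have := div_pos (mul_pos (mul_pos hηpos hβ) hMpos) hS0ε
    linarith only [this, hd]
  have hStpos : 0 < St := by rw [hSt]; exact div_pos hlam hdenpos
  have hlamSt : lam / St = η * β * M / (S0 - ε) + d := by
    rw [hSt, div_div_eq_mul_div, mul_comm, mul_div_assoc, div_self hlam.ne', mul_one]
  have hKpos : 0 < lam / St := div_pos hlam hStpos
  -- Sstar < St
  have hSstarSt : Sstar < St := by
    have hD1pos : 0 < β * M / S0 + d := by
      have := div_pos (mul_pos hβ hMpos) hS0pos
      linarith only [this, hd]
    have hDS : Sstar = lam / (β * M / S0 + d) := by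
      rw [eq_div_iff hD1pos.ne']
      field_simp [hS0ne] at heqS ⊢
      linarith only [heqS]
    have hdlt : η * β * M / (S0 - ε) + d < β * M / S0 + d := by
      have h6 : η * β * M / (S0 - ε) < β * M / S0 := by
        rw [div_lt_div_iff₀ hS0ε hS0pos]
        nlinarith only [mul_pos (mul_pos hβ hMpos)
          (by linarith only [hηS0] : (0:ℝ) < S0 - ε - η * S0)]
      linarith only [h6]
    rw [hDS, hSt]
    exact div_lt_div_of_pos_left hlam hdenpos hdlt
  have hLSstar : lam / (β * m) ≤ Sstar := by
    rw [div_le_iff₀ hβm]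
    linarith only [hL]
  have hStL : 0 < St + ε - lam / (β * m) := by linarith only [hLSstar, hSstarSt, hε0]
  have hktSt : kt * St = Sstar * (S0 + 2 * ε) / S0 := by
    rw [hkt]
    field_simp
  have hktpos : 0 < kt := by
    rw [hkt]
    exact div_pos (mul_pos hSs (by linarith only [hS0pos, hε0])) (mul_pos hS0pos hStpos)
  set arg : ℝ := (1 - kt) * St / (St + ε - lam / (β * m)) with hargdef
  have hargpos : 0 < arg :=
    div_pos (mul_pos (by linarith only [hkt1]) hStpos) hStL
  have h5 : Sstar < kt * St := by
    rw [hktSt, lt_div_iff₀ hS0pos]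
    nlinarith only [mul_pos hSs hε0]
  have harglt1 : arg < 1 := by
    rw [hargdef, div_lt_one hStL]
    nlinarith only [h5, hLSstar, hε0]
  have hT2pos : 0 < T2 := by
    rw [hT2]
    have hlog := Real.log_neg hargpos harglt1
    nlinarith only [mul_pos (div_pos hStpos hlam) (neg_pos.2 hlog)]
  -- positivity of T1
  have hIltS0 : Istar < S0 := by
    linarith only [hsum, hSs, hEs, hAs, hQs, hRs]
  have hAltS0 : Astar < S0 := by
    linarith only [hsum, hSs, hEs, hIs, hQs, hRs]
  have hx1den : 0 < S0 + ε - θ * Istar := by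
    nlinarith only [mul_pos (by linarith only [hθ1] : (0:ℝ) < 1 - θ) hIs, hIltS0, hε0]
  have hx2den : 0 < S0 + ε - θ * Astar := by
    nlinarith only [mul_pos (by linarith only [hθ1] : (0:ℝ) < 1 - θ) hAs, hAltS0, hε0]
  set x1 : ℝ := (η - θ) * Istar / (S0 + ε - θ * Istar) with hx1def
  set x2 : ℝ := (η - θ) * Astar / (S0 + ε - θ * Astar) with hx2def
  have hx1pos : 0 < x1 := div_pos (mul_pos (by linarith only [hθη]) hIs) hx1den
  have hx2pos : 0 < x2 := div_pos (mul_pos (by linarith only [hθη]) hAs) hx2den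
  have hx1lt1 : x1 < 1 := by
    rw [hx1def, div_lt_one hx1den]
    nlinarith only [mul_pos (by linarith only [hη1] : (0:ℝ) < 1 - η) hIs, hIltS0, hε0]
  have hx2lt1 : x2 < 1 := by
    rw [hx2def, div_lt_one hx2den]
    nlinarith only [mul_pos (by linarith only [hη1] : (0:ℝ) < 1 - η) hAs, hAltS0, hε0]
  have hT1pos : 0 < T1 := by
    have hlog := Real.log_neg hx1pos hx1lt1
    have h7 : 0 < -(1 / B1) * Real.log x1 := by
      nlinarith only [mul_pos (div_pos one_pos hB1pos) (neg_pos.2 hlog)]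
    calc (0:ℝ) < -(1 / B1) * Real.log x1 := h7
      _ ≤ T1 := by rw [hT1]; exact le_max_left _ _
  -- Gronwall for I on [t0, ∞)
  have hIg : ∀ s, t0 ≤ s →
      I s ≤ θ * Istar + (I t0 - θ * Istar) * Real.exp (-(B1 * (s - t0))) := by
    apply my_gronwall_le I (fun s => p * c * E s - B1 * I s) B1 (θ * Istar) t0 hB1pos
      (fun s hs => hI' s (le_trans ht0 hs))
    intro s hs
    show p * c * E s - B1 * I s ≤ B1 * (θ * Istar - I s)
    have h1 : p * c * E s ≤ p * c * (θ * Estar) :=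
      mul_le_mul_of_nonneg_left (hEb s hs) (mul_pos hp hc).le
    have h2 : θ * (p * c * Estar) = θ * (B1 * Istar) := by rw [hIeq]
    linarith only [h1, h2]
  have hAg : ∀ s, t0 ≤ s →
      A s ≤ θ * Astar + (A t0 - θ * Astar) * Real.exp (-(B2 * (s - t0))) := by
    apply my_gronwall_le A (fun s => (1 - p) * c * E s - B2 * A s) B2 (θ * Astar) t0 hB2pos
      (fun s hs => hA' s (le_trans ht0 hs))
    intro s hs
    show (1 - p) * c * E s - B2 * A s ≤ B2 * (θ * Astar - A s)
    have h1 : (1 - p) * c * E s ≤ (1 - p) * c * (θ * Estar) :=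
      mul_le_mul_of_nonneg_left (hEb s hs) (mul_pos hp1' hc).le
    have h2 : θ * ((1 - p) * c * Estar) = θ * (B2 * Astar) := by rw [hAeq]
    linarith only [h1, h2]
  -- I and A bounded by η-levels for s ≥ t0 + T1
  have hIbd : ∀ s, t0 + T1 ≤ s → I s ≤ η * Istar := by
    intro s hs
    have hst0 : t0 ≤ s := by linarith only [hs, hT1pos]
    have h6 := hIg s hst0
    have hIt0 := hIb t0 le_rfl
    have hexpb : Real.exp (-(B1 * (s - t0))) ≤ x1 := by
      have h1 : -(1 / B1) * Real.log x1 ≤ T1 := by rw [hT1]; exact le_max_left _ _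
      have h4 := mul_le_mul_of_nonneg_left h1 hB1pos.le
      have h5' : B1 * (-(1 / B1) * Real.log x1) = -Real.log x1 := by field_simp
      have h3 : -Real.log x1 ≤ B1 * T1 := by linarith only [h4, h5']
      have h7 : B1 * T1 ≤ B1 * (s - t0) :=
        mul_le_mul_of_nonneg_left (by linarith only [hs]) hB1pos.le
      calc Real.exp (-(B1 * (s - t0))) ≤ Real.exp (Real.log x1) :=
            Real.exp_le_exp.2 (by linarith only [h3, h7])
        _ = x1 := Real.exp_log hx1pos
    have hepos := Real.exp_pos (-(B1 * (s - t0)))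
    have hxe : (I t0 - θ * Istar) * Real.exp (-(B1 * (s - t0)))
        ≤ (S0 + ε - θ * Istar) * x1 := by
      nlinarith only [mul_nonneg hx1den.le
          (by linarith only [hexpb] : (0:ℝ) ≤ x1 - Real.exp (-(B1 * (s - t0)))),
        mul_pos hepos (by linarith only [hIt0] :
          (0:ℝ) < S0 + ε - θ * Istar - (I t0 - θ * Istar))]
    have hxx : (S0 + ε - θ * Istar) * x1 = (η - θ) * Istar := by
      rw [hx1def]
      field_simp
    linarith only [h6, hxe, hxx]
  have hAbd : ∀ s, t0 + T1 ≤ s → A s ≤ η * Astar := by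
    intro s hs
    have hst0 : t0 ≤ s := by linarith only [hs, hT1pos]
    have h6 := hAg s hst0
    have hAt0 := hAb t0 le_rfl
    have hexpb : Real.exp (-(B2 * (s - t0))) ≤ x2 := by
      have h1 : -(1 / B2) * Real.log x2 ≤ T1 := by rw [hT1]; exact le_max_right _ _
      have h4 := mul_le_mul_of_nonneg_left h1 hB2pos.le
      have h5' : B2 * (-(1 / B2) * Real.log x2) = -Real.log x2 := by field_simp
      have h3 : -Real.log x2 ≤ B2 * T1 := by linarith only [h4, h5']
      have h7 : B2 * T1 ≤ B2 * (s - t0) :=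
        mul_le_mul_of_nonneg_left (by linarith only [hs]) hB2pos.le
      calc Real.exp (-(B2 * (s - t0))) ≤ Real.exp (Real.log x2) :=
            Real.exp_le_exp.2 (by linarith only [h3, h7])
        _ = x2 := Real.exp_log hx2pos
    have hepos := Real.exp_pos (-(B2 * (s - t0)))
    have hxe : (A t0 - θ * Astar) * Real.exp (-(B2 * (s - t0)))
        ≤ (S0 + ε - θ * Astar) * x2 := by
      nlinarith only [mul_nonneg hx2den.le
          (by linarith only [hexpb] : (0:ℝ) ≤ x2 - Real.exp (-(B2 * (s - t0)))),
        mul_pos hepos (by linarith only [hAt0] :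
          (0:ℝ) < S0 + ε - θ * Astar - (A t0 - θ * Astar))]
    have hxx : (S0 + ε - θ * Astar) * x2 = (η - θ) * Astar := by
      rw [hx2def]
      field_simp
    linarith only [h6, hxe, hxx]
  -- Gronwall for S on [t0 + T1, ∞)
  have hSg : ∀ s, t0 + T1 ≤ s →
      St + (S (t0 + T1) - St) * Real.exp (-((lam / St) * (s - (t0 + T1)))) ≤ S s := by
    apply my_gronwall_ge S (fun s => lam - β * S s * (a * E s + I s + b * A s) / N s - d * S s)
      (lam / St) St (t0 + T1) hKpos
      (fun s hs => hS' s (by linarith only [hs, ht0, hT1pos]))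
    intro s hs
    show lam / St * (St - S s) ≤ lam - β * S s * (a * E s + I s + b * A s) / N s - d * S s
    have hIs' := hIbd s hs
    have hAs' := hAbd s hs
    have hst0 : t0 ≤ s := by linarith only [hs, hT1pos]
    have hEs' := hEb s hst0
    have hNl := hNlow s hst0
    have hSnn := (hnonneg s (le_trans ht0 hst0)).1
    have hnum : a * E s + I s + b * A s ≤ η * M := by
      have e1 : a * E s ≤ a * (θ * Estar) := mul_le_mul_of_nonneg_left hEs' ha.le
      have e2 : b * A s ≤ b * (η * Astar) := mul_le_mul_of_nonneg_left hAs' hb.le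
      have e3 : a * (θ * Estar) ≤ a * (η * Estar) := by
        nlinarith only [mul_nonneg (mul_nonneg ha.le
          (by linarith only [hθη] : (0:ℝ) ≤ η - θ)) hEs.le]
      rw [hMdef]
      nlinarith only [e1, e2, e3, hIs']
    have hfrac : β * S s * (a * E s + I s + b * A s) / N s ≤ η * β * M / (S0 - ε) * S s := by
      have h7 : β * S s * (a * E s + I s + b * A s) ≤ β * S s * (η * M) :=
        mul_le_mul_of_nonneg_left hnum (mul_nonneg hβ.le hSnn)
      have h8 : β * S s * (a * E s + I s + b * A s) / N s ≤ β * S s * (η * M) / (S0 - ε) :=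
        div_le_div₀ (mul_nonneg (mul_nonneg hβ.le hSnn)
          (mul_nonneg hηpos.le hMpos.le)) h7 hS0ε (le_of_lt hNl)
      have h9 : β * S s * (η * M) / (S0 - ε) = η * β * M / (S0 - ε) * S s := by ring
      linarith only [h8, h9]
    have hStSt : lam / St * St = lam := div_mul_cancel₀ lam hStpos.ne'
    have h9 : lam / St * S s = (η * β * M / (S0 - ε) + d) * S s := by rw [hlamSt]
    nlinarith only [hfrac, hStSt, h9]
  -- conclusion
  intro t ht
  have htt0 : t0 ≤ t := by linarith only [ht, hT1pos, hT2pos]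
  have ht0t : (0:ℝ) ≤ t := le_trans ht0 htt0
  have ht1 : t0 + T1 ≤ t := by linarith only [ht, hT2pos]
  have hmain := hSg t ht1
  have hSt1 : lam / (β * m) - ε < S (t0 + T1) := hSlow _ (by linarith only [hT1pos])
  have he2pos := Real.exp_pos (-((lam / St) * (t - (t0 + T1))))
  have hearg : Real.exp (-((lam / St) * (t - (t0 + T1)))) ≤ arg := by
    have hcan : lam / St * (St / lam) = 1 := by field_simp
    have h10 : lam / St * T2 = -Real.log arg := by
      rw [hT2]
      linear_combination (-Real.log arg) * hcan
    have h11 : -((lam / St) * (t - (t0 + T1))) ≤ -((lam / St) * T2) := by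
      have h12 : T2 ≤ t - (t0 + T1) := by linarith only [ht]
      nlinarith only [mul_le_mul_of_nonneg_left h12 hKpos.le]
    calc Real.exp (-((lam / St) * (t - (t0 + T1)))) ≤ Real.exp (-(lam / St * T2)) :=
          Real.exp_le_exp.2 h11
      _ = arg := by rw [h10, neg_neg]; exact Real.exp_log hargpos
  have hDarg : (St + ε - lam / (β * m)) * arg = (1 - kt) * St := by
    rw [hargdef, mul_comm]
    exact div_mul_cancel₀ _ hStL.ne'
  have hfin : kt * St < S t := by
    have s1 : (lam / (β * m) - ε - St) * Real.exp (-((lam / St) * (t - (t0 + T1))))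
        < (S (t0 + T1) - St) * Real.exp (-((lam / St) * (t - (t0 + T1)))) :=
      mul_lt_mul_of_pos_right (by linarith only [hSt1]) he2pos
    have s2 : (St + ε - lam / (β * m)) * Real.exp (-((lam / St) * (t - (t0 + T1))))
        ≤ (St + ε - lam / (β * m)) * arg :=
      mul_le_mul_of_nonneg_left hearg hStL.le
    nlinarith only [hmain, s1, s2, hDarg]
  constructor
  · rw [div_lt_div_iff₀ hS0pos (by linarith only [hS0pos, hε0] : (0:ℝ) < S0 + ε)]
    have hq : kt * St * S0 = Sstar * (S0 + 2 * ε) := by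
      rw [hktSt]
      field_simp
    nlinarith only [hq, mul_pos hSs hε0]
  · have hNt := hNpos t ht0t
    have hNh := hNhigh t htt0
    have hSpos : 0 < S t := lt_trans (mul_pos hktpos hStpos) hfin
    rw [div_lt_div_iff₀ (by linarith only [hS0pos, hε0] : (0:ℝ) < S0 + ε) hNt]
    nlinarith only [mul_lt_mul_of_pos_right hfin hNt, mul_lt_mul_of_pos_left hNh hSpos]
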